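/- In a weakly norming graph H without isolated vertices, every connected component has the same number of edges. -/

import Mathlib

open MeasureTheory

noncomputable def sym2Val {V Ω : Type*} (W : Ω → Ω → ℝ) (x : V → Ω) : Sym2 V → ℝ :=
  Sym2.lift ⟨fun i j => (W (x i) (x j) + W (x j) (x i)) / 2, fun i j => by simp [add_comm]⟩

/-- Homomorphism density `t(G, W)` of a graph `G` in a symmetric kernel `W`. -/
noncomputable def homDensity {V : Type} [Fintype V] {Ω : Type*} [MeasurableSpace Ω]
    (G : SimpleGraph V) (μ : Measure Ω) (W : Ω → Ω → ℝ) : ℝ :=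
  ∫ x : V → Ω, ∏ᶠ e ∈ G.edgeSet, sym2Val W x e ∂(Measure.pi fun _ => μ)

/-- Decorated homomorphism density `t(G, w)` for a decoration `w` of the edges. -/
noncomputable def decDensity {V : Type} [Fintype V] {Ω : Type*} [MeasurableSpace Ω]
    (G : SimpleGraph V) (μ : Measure Ω) (w : Sym2 V → Ω → Ω → ℝ) : ℝ :=
  ∫ x : V → Ω, ∏ᶠ e ∈ G.edgeSet, sym2Val (w e) x e ∂(Measure.pi fun _ => μ)

/-- Bounded symmetric measurable kernel. -/
def GoodKernel {Ω : Type*} [MeasurableSpace Ω] (W : Ω → Ω → ℝ) : Prop :=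
  Measurable (Function.uncurry W) ∧ (∀ x y, W x y = W y x) ∧ ∃ C, ∀ x y, |W x y| ≤ C

/-- Hatami's Hölder-type characterisation of weakly norming graphs. -/
def WeaklyNorming {V : Type} [Fintype V] (G : SimpleGraph V) : Prop :=
  ∀ (Ω : Type) (_ : MeasurableSpace Ω) (μ : Measure Ω), IsProbabilityMeasure μ →
    ∀ w : Sym2 V → Ω → Ω → ℝ, (∀ e, GoodKernel (w e)) → (∀ e x y, 0 ≤ w e x y) →
      decDensity G μ w ^ G.edgeSet.ncard ≤ ∏ᶠ e ∈ G.edgeSet, homDensity G μ (w e)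

/-- Hatami's Hölder-type characterisation of seminorming graphs. -/
def Seminorming {V : Type} [Fintype V] (G : SimpleGraph V) : Prop :=
  ∀ (Ω : Type) (_ : MeasurableSpace Ω) (μ : Measure Ω), IsProbabilityMeasure μ →
    ∀ w : Sym2 V → Ω → Ω → ℝ, (∀ e, GoodKernel (w e)) →
      decDensity G μ w ^ G.edgeSet.ncard ≤ ∏ᶠ e ∈ G.edgeSet, |homDensity G μ (w e)|

/-- Norming: seminorming and `‖·‖_H` vanishes only on a.e.-zero kernels. -/
def Norming {V : Type} [Fintype V] (G : SimpleGraph V) : Prop :=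
  Seminorming G ∧
    ∀ (Ω : Type) (_ : MeasurableSpace Ω) (μ : Measure Ω), IsProbabilityMeasure μ →
      ∀ W : Ω → Ω → ℝ, GoodKernel W → homDensity G μ W = 0 →
        ∀ᵐ p ∂(μ.prod μ), W p.1 p.2 = 0

section WNAux
open Finset MeasureTheory
open scoped ENNReal

attribute [local instance] Classical.propDecidable

noncomputable def unifB : Measure Bool := (2:ℝ≥0∞)⁻¹ • (Measure.dirac false + Measure.dirac true)

lemma unifB_singleton (b : Bool) : unifB {b} = 2⁻¹ := by
  cases b <;>
    simp [unifB, Measure.smul_apply, Measure.add_apply, Measure.dirac_apply]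

instance : IsProbabilityMeasure unifB := by
  constructor
  simp [unifB, Measure.smul_apply, Measure.add_apply, Measure.dirac_apply]
  rw [← two_mul, ENNReal.mul_inv_cancel] <;> norm_num

variable {V : Type} [Fintype V]

lemma piB_singleton (x : V → Bool) :
    (Measure.pi fun _ : V => unifB) {x} = 2⁻¹ ^ (Fintype.card V) := by
  rw [← Set.univ_pi_singleton, Measure.pi_pi]
  simp [unifB_singleton, Finset.prod_const]

lemma integral_piB (f : (V → Bool) → ℝ) :
    ∫ x, f x ∂(Measure.pi fun _ : V => unifB)
      = ∑ x : V → Bool, (2⁻¹:ℝ) ^ (Fintype.card V) * f x := by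
  rw [integral_fintype _]
  congr 1
  ext x
  rw [measureReal_def, piB_singleton]
  simp [smul_eq_mul]
  exact Integrable.of_finite


/-! ### Kernels -/

noncomputable def Wone : Bool → Bool → ℝ := fun _ _ => 1
noncomputable def Wlow : Bool → Bool → ℝ := fun a b => if a = false ∧ b = false then 1 else 0
noncomputable def Wdiag (t : ℝ) : Bool → Bool → ℝ := fun a b => if a = b then t else 0

lemma sym2Val_mk {Ω : Type*} (W : Ω → Ω → ℝ) (x : V → Ω) (i j : V) :
    sym2Val W x s(i, j) = (W (x i) (x j) + W (x j) (x i)) / 2 := rfl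

lemma sym2Val_Wone (x : V → Bool) (e : Sym2 V) : sym2Val Wone x e = 1 := by
  induction e using Sym2.ind with
  | _ i j => rw [sym2Val_mk]; norm_num [Wone]

lemma sym2Val_Wlow (x : V → Bool) (e : Sym2 V) :
    sym2Val Wlow x e = if (∀ v ∈ e, x v = false) then 1 else 0 := by
  induction e using Sym2.ind with
  | _ i j =>
    rw [sym2Val_mk]
    have h1 : (∀ v ∈ s(i, j), x v = false) ↔ (x i = false ∧ x j = false) := by
      constructor
      · intro h; exact ⟨h i (Sym2.mem_mk_left _ _), h j (Sym2.mem_mk_right _ _)⟩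
      · rintro ⟨h1, h2⟩ v hv
        rcases Sym2.mem_iff.mp hv with rfl | rfl <;> assumption
    rw [if_congr h1 rfl rfl]
    by_cases h : x i = false ∧ x j = false
    · simp [Wlow, h, h.1, h.2]
    · rw [if_neg h]
      simp only [Wlow]
      rw [if_neg (fun hc => h ⟨hc.1, hc.2⟩), if_neg (fun hc => h ⟨hc.2, hc.1⟩)]
      norm_num

lemma sym2Val_Wdiag (t : ℝ) (x : V → Bool) (e : Sym2 V) :
    sym2Val (Wdiag t) x e = if (∀ a ∈ e, ∀ b ∈ e, x a = x b) then t else 0 := by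
  induction e using Sym2.ind with
  | _ i j =>
    rw [sym2Val_mk]
    have h1 : (∀ a ∈ s(i, j), ∀ b ∈ s(i, j), x a = x b) ↔ (x i = x j) := by
      constructor
      · intro h; exact h i (Sym2.mem_mk_left _ _) j (Sym2.mem_mk_right _ _)
      · intro h a ha b hb
        rcases Sym2.mem_iff.mp ha with rfl | rfl <;>
          rcases Sym2.mem_iff.mp hb with rfl | rfl <;> first | rfl | exact h | exact h.symm
    rw [if_congr h1 rfl rfl]
    by_cases h : x i = x j
    · simp [Wdiag, h]
    · rw [if_neg h]
      simp only [Wdiag]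
      rw [if_neg h, if_neg (fun hc => h hc.symm)]
      norm_num

lemma goodKernel_Wone : GoodKernel Wone :=
  ⟨measurable_const, fun _ _ => rfl, 1, fun _ _ => by norm_num [Wone]⟩

lemma goodKernel_Wlow : GoodKernel Wlow := by
  refine ⟨measurable_of_countable _, fun a b => ?_, 1, fun a b => ?_⟩
  · simp only [Wlow, and_comm]
  · simp only [Wlow]; split_ifs <;> norm_num

lemma goodKernel_Wdiag (t : ℝ) : GoodKernel (Wdiag t) := by
  refine ⟨measurable_of_countable _, fun a b => ?_, |t|, fun a b => ?_⟩
  · simp only [Wdiag, eq_comm]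
  · simp only [Wdiag]; split_ifs <;> simp [abs_nonneg]

/-! ### Graph combinatorics -/

variable (H : SimpleGraph V)

noncomputable instance : Fintype H.ConnectedComponent :=
  @Fintype.ofFinite _ (Finite.of_surjective H.connectedComponentMk fun c => Quot.exists_rep c)

noncomputable def EFn : Finset (Sym2 V) := (Set.toFinite H.edgeSet).toFinset

def Pc (c : H.ConnectedComponent) (e : Sym2 V) : Prop := ∀ v ∈ e, v ∈ c.supp

noncomputable def mFn (c : H.ConnectedComponent) : Finset (Sym2 V) := (EFn H).filter (Pc H c)

noncomputable def SFn (c : H.ConnectedComponent) : Finset V :=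
  Finset.univ.filter (fun v => H.connectedComponentMk v = c)

lemma mem_EFn {e : Sym2 V} : e ∈ EFn H ↔ e ∈ H.edgeSet := Set.Finite.mem_toFinset _

lemma mem_SFn {c : H.ConnectedComponent} {v : V} :
    v ∈ SFn H c ↔ v ∈ c.supp := by
  simp [SFn, SimpleGraph.ConnectedComponent.mem_supp_iff]

lemma edgeSet_ncard : H.edgeSet.ncard = (EFn H).card := by
  rw [← Set.Finite.coe_toFinset (Set.toFinite H.edgeSet), Set.ncard_coe_finset]; rfl

lemma comp_set_ncard (c : H.ConnectedComponent) :
    {e ∈ H.edgeSet | ∀ v ∈ e, v ∈ c.supp}.ncard = (mFn H c).card := by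
  rw [show {e ∈ H.edgeSet | ∀ v ∈ e, v ∈ c.supp} = ↑(mFn H c) from ?_, Set.ncard_coe_finset]
  ext e
  simp only [Set.mem_setOf_eq, Finset.coe_filter, mFn, mem_EFn, Pc]

lemma sum_SFn_card : ∑ c : H.ConnectedComponent, (SFn H c).card = Fintype.card V := by
  rw [← Finset.card_univ,
    Finset.card_eq_sum_card_fiberwise
      (f := H.connectedComponentMk) (t := Finset.univ) (fun v _ => Finset.mem_univ _)]
  rfl

lemma adj_of_mem_EFn {e : Sym2 V} (he : e ∈ EFn H) : H.Adj e.out.1 e.out.2 := by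
  rw [mem_EFn] at he
  rwa [show e = s(e.out.1, e.out.2) from by rw [Sym2.mk, Prod.mk.eta, e.out_eq],
    SimpleGraph.mem_edgeSet] at he

lemma Pc_iff {c : H.ConnectedComponent} {e : Sym2 V} (he : e ∈ EFn H) :
    Pc H c e ↔ H.connectedComponentMk e.out.1 = c := by
  constructor
  · intro h
    exact (SimpleGraph.ConnectedComponent.mem_supp_iff _ _).mp (h _ (Sym2.out_fst_mem e))
  · intro h v hv
    have hadj := adj_of_mem_EFn H he
    have he2 : e = s(e.out.1, e.out.2) := by rw [Sym2.mk, Prod.mk.eta, e.out_eq]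
    rw [he2] at hv
    rw [SimpleGraph.ConnectedComponent.mem_supp_iff]
    rcases Sym2.mem_iff.mp hv with rfl | rfl
    · exact h
    · rw [← h]
      exact (SimpleGraph.ConnectedComponent.connectedComponentMk_eq_of_adj hadj).symm

lemma sum_mFn_card : ∑ c : H.ConnectedComponent, (mFn H c).card = (EFn H).card := by
  rw [Finset.card_eq_sum_card_fiberwise
      (f := fun e => H.connectedComponentMk e.out.1) (t := Finset.univ)
      (fun e _ => Finset.mem_univ _)]
  refine Finset.sum_congr rfl fun c _ => ?_
  unfold mFn
  congr 1
  apply Finset.filter_congr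
  intro e he
  rw [Pc_iff H he]

/-! ### Counting -/

lemma sum_indicator_allb (S : Finset V) (b : Bool) :
    ∑ x : V → Bool, (if (∀ v ∈ S, x v = b) then (1:ℝ) else 0)
      = 2 ^ (Fintype.card V - S.card) := by
  have key : ∀ x : V → Bool,
      (if (∀ v ∈ S, x v = b) then (1:ℝ) else 0)
        = ∏ v : V, (if v ∈ S then (if x v = b then (1:ℝ) else 0) else 1) := by
    intro x
    rw [Finset.prod_ite, Finset.prod_const_one, mul_one]
    rw [show Finset.univ.filter (fun v => v ∈ S) = S from by simp]
    rw [Finset.prod_boole]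
    congr 1
  simp_rw [key]
  rw [← Fintype.prod_sum (fun (v : V) (y : Bool) => if v ∈ S then (if y = b then (1:ℝ) else 0) else 1)]
  have inner : ∀ v : V,
      (∑ b' : Bool, if v ∈ S then (if b' = b then (1:ℝ) else 0) else 1)
        = if v ∈ S then 1 else 2 := by
    intro v
    by_cases hv : v ∈ S
    · simp [hv, Finset.sum_ite_eq' Finset.univ b (fun _ => (1:ℝ))]
    · simp [hv]
  simp_rw [inner]
  rw [Finset.prod_ite, Finset.prod_const_one, one_mul, Finset.prod_const]
  congr 1
  rw [show Finset.univ.filter (fun v => ¬ v ∈ S) = Sᶜ from by ext v; simp,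
    Finset.card_compl]

lemma reach_const {x : V → Bool} (h : ∀ a b, H.Adj a b → x a = x b) :
    ∀ a b : V, H.Reachable a b → x a = x b := by
  have key : ∀ a b : V, H.Walk a b → x a = x b := by
    intro a b p
    induction p with
    | nil => rfl
    | cons hadj q ih => exact (h _ _ hadj).trans ih
  exact fun a b hr => hr.elim (key a b)

lemma reach_const_comp {c : H.ConnectedComponent} {x : V → Bool}
    (h : ∀ a b, H.Adj a b → H.connectedComponentMk a = c → x a = x b) :
    ∀ a b : V, H.connectedComponentMk a = c → H.Reachable a b → x a = x b := by
  have key : ∀ a b : V, H.Walk a b → H.connectedComponentMk a = c → x a = x b := by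
    intro a b p
    induction p with
    | nil => exact fun _ => rfl
    | @cons u v w hadj q ih =>
      intro hu
      refine (h _ _ hadj hu).trans (ih ?_)
      rw [← SimpleGraph.ConnectedComponent.connectedComponentMk_eq_of_adj hadj]
      exact hu
  exact fun a b ha hr => hr.elim (fun p => key a b p ha)

lemma count_Q :
    ∑ x : V → Bool, (if (∀ a b, H.Adj a b → x a = x b) then (1:ℝ) else 0)
      = 2 ^ (Fintype.card H.ConnectedComponent) := by
  rw [Finset.sum_boole]
  norm_num
  have : (Finset.univ.filter (fun x : V → Bool => ∀ a b, H.Adj a b → x a = x b)).card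
      = Fintype.card {x : V → Bool // ∀ a b, H.Adj a b → x a = x b} := by
    rw [Fintype.card_subtype]
  rw [this]
  have e : {x : V → Bool // ∀ a b, H.Adj a b → x a = x b} ≃ (H.ConnectedComponent → Bool) :=
    { toFun := fun x c => x.1 (Quot.out c)
      invFun := fun y => ⟨fun a => y (H.connectedComponentMk a), fun a b hadj => by
        dsimp only
        rw [SimpleGraph.ConnectedComponent.connectedComponentMk_eq_of_adj hadj]⟩
      left_inv := by
        intro x
        ext a
        refine reach_const H x.2 _ _ ?_
        rw [← SimpleGraph.ConnectedComponent.eq]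
        exact Quot.out_eq _
      right_inv := by
        intro y
        funext c
        exact congrArg y (Quot.out_eq c) }
  rw [Fintype.card_congr e, Fintype.card_fun, Fintype.card_bool]
  norm_cast

/-! ### Densities -/

lemma finprod_edgeSet (f : Sym2 V → ℝ) : (∏ᶠ e ∈ H.edgeSet, f e) = ∏ e ∈ EFn H, f e := by
  rw [← Set.Finite.coe_toFinset (Set.toFinite H.edgeSet), finprod_mem_coe_finset]
  rfl

noncomputable def wD (K : Bool → Bool → ℝ) (c : H.ConnectedComponent) :
    Sym2 V → Bool → Bool → ℝ := fun e => if Pc H c e then K else Wone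

lemma decDensity_eq_sum (w : Sym2 V → Bool → Bool → ℝ) :
    decDensity H unifB w
      = ∑ x : V → Bool, (2⁻¹:ℝ) ^ (Fintype.card V) * ∏ e ∈ EFn H, sym2Val (w e) x e := by
  unfold decDensity
  simp_rw [finprod_edgeSet]
  exact integral_piB _

lemma homDensity_eq_sum (W : Bool → Bool → ℝ) :
    homDensity H unifB W
      = ∑ x : V → Bool, (2⁻¹:ℝ) ^ (Fintype.card V) * ∏ e ∈ EFn H, sym2Val W x e := by
  unfold homDensity
  simp_rw [finprod_edgeSet]
  exact integral_piB _

lemma goodKernel_wD {K : Bool → Bool → ℝ} (hK : GoodKernel K) (c : H.ConnectedComponent) :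
    ∀ e, GoodKernel (wD H K c e) := by
  intro e
  unfold wD
  split_ifs
  · exact hK
  · exact goodKernel_Wone

lemma wD_nonneg {K : Bool → Bool → ℝ} (hK : ∀ a b, 0 ≤ K a b) (c : H.ConnectedComponent) :
    ∀ e x y, 0 ≤ wD H K c e x y := by
  intro e x y
  unfold wD
  split_ifs
  · exact hK x y
  · norm_num [Wone]

lemma half_pow (a b : ℕ) (h : b ≤ a) : (2⁻¹:ℝ) ^ a * 2 ^ (a - b) = 2⁻¹ ^ b := by
  have h1 : (2⁻¹:ℝ) ^ a = 2⁻¹ ^ b * 2⁻¹ ^ (a - b) := by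
    rw [← pow_add]
    congr 1
    omega
  rw [h1, mul_assoc, ← mul_pow]
  norm_num

lemma prod_wD_Wlow (hnoiso : ∀ v : V, ∃ u, H.Adj v u) (c : H.ConnectedComponent) (x : V → Bool) :
    (∏ e ∈ EFn H, sym2Val (wD H Wlow c e) x e)
      = if (∀ v ∈ SFn H c, x v = false) then 1 else 0 := by
  have hstep : ∀ e ∈ EFn H, sym2Val (wD H Wlow c e) x e
      = if Pc H c e then (if (∀ v ∈ e, x v = false) then (1:ℝ) else 0) else 1 := by
    intro e _
    unfold wD
    by_cases h : Pc H c e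
    · rw [if_pos h, if_pos h, sym2Val_Wlow]
    · rw [if_neg h, if_neg h]
      exact sym2Val_Wone x e
  rw [Finset.prod_congr rfl hstep, ← Finset.prod_filter, Finset.prod_boole]
  have hiff : (∀ e ∈ (EFn H).filter (Pc H c), ∀ v ∈ e, x v = false)
      ↔ (∀ v ∈ SFn H c, x v = false) := by
    constructor
    · intro h v hv
      rw [mem_SFn] at hv
      obtain ⟨u, hu⟩ := hnoiso v
      have he : s(v, u) ∈ EFn H := (mem_EFn H).mpr ((SimpleGraph.mem_edgeSet H).mpr hu)
      have hP : Pc H c s(v, u) := by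
        intro w hw
        rcases Sym2.mem_iff.mp hw with rfl | rfl
        · exact hv
        · rw [SimpleGraph.ConnectedComponent.mem_supp_iff] at hv ⊢
          rw [← SimpleGraph.ConnectedComponent.connectedComponentMk_eq_of_adj hu]
          exact hv
      exact h _ (Finset.mem_filter.mpr ⟨he, hP⟩) v (Sym2.mem_mk_left _ _)
    · intro h e he v hv
      exact h v ((mem_SFn H).mpr ((Finset.mem_filter.mp he).2 v hv))
  simp only [hiff]

lemma prod_Wlow_full (hnoiso : ∀ v : V, ∃ u, H.Adj v u) (x : V → Bool) :
    (∏ e ∈ EFn H, sym2Val Wlow x e)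
      = if (∀ v ∈ (Finset.univ : Finset V), x v = false) then 1 else 0 := by
  have hstep : ∀ e ∈ EFn H, sym2Val Wlow x e
      = if (∀ v ∈ e, x v = false) then (1:ℝ) else 0 := fun e _ => sym2Val_Wlow x e
  rw [Finset.prod_congr rfl hstep, Finset.prod_boole]
  have hiff : (∀ e ∈ EFn H, ∀ v ∈ e, x v = false)
      ↔ (∀ v ∈ (Finset.univ : Finset V), x v = false) := by
    constructor
    · intro h v _
      obtain ⟨u, hu⟩ := hnoiso v
      have he : s(v, u) ∈ EFn H := (mem_EFn H).mpr ((SimpleGraph.mem_edgeSet H).mpr hu)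
      exact h _ he v (Sym2.mem_mk_left _ _)
    · intro h e _ v _
      exact h v (Finset.mem_univ v)
  simp only [hiff]

lemma decDensity_wD_Wlow (hnoiso : ∀ v : V, ∃ u, H.Adj v u) (c : H.ConnectedComponent) :
    decDensity H unifB (wD H Wlow c) = (2⁻¹:ℝ) ^ (SFn H c).card := by
  have hle : (SFn H c).card ≤ Fintype.card V := by
    rw [← Finset.card_univ]
    exact Finset.card_filter_le _ _
  rw [decDensity_eq_sum]
  simp_rw [prod_wD_Wlow H hnoiso c]
  rw [← Finset.mul_sum, sum_indicator_allb (SFn H c) false]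
  exact half_pow _ _ hle

lemma homDensity_Wlow (hnoiso : ∀ v : V, ∃ u, H.Adj v u) :
    homDensity H unifB Wlow = (2⁻¹:ℝ) ^ (Fintype.card V) := by
  rw [homDensity_eq_sum]
  simp_rw [prod_Wlow_full H hnoiso]
  rw [← Finset.mul_sum, sum_indicator_allb (Finset.univ : Finset V) false]
  rw [Finset.card_univ]
  simp

lemma homDensity_Wone : homDensity H unifB Wone = 1 := by
  rw [homDensity_eq_sum]
  simp_rw [sym2Val_Wone, Finset.prod_const_one, mul_one, Finset.sum_const,
    Finset.card_univ, Fintype.card_fun, Fintype.card_bool, nsmul_eq_mul]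
  push_cast
  rw [← mul_pow]
  norm_num

lemma finprod_homDensity_wD (K : Bool → Bool → ℝ) (c : H.ConnectedComponent) :
    (∏ᶠ e ∈ H.edgeSet, homDensity H unifB (wD H K c e))
      = (homDensity H unifB K) ^ (mFn H c).card := by
  rw [finprod_edgeSet]
  have hstep : ∀ e ∈ EFn H, homDensity H unifB (wD H K c e)
      = if Pc H c e then homDensity H unifB K else 1 := by
    intro e _
    unfold wD
    by_cases h : Pc H c e
    · rw [if_pos h, if_pos h]
    · rw [if_neg h, if_neg h]
      exact homDensity_Wone H
  rw [Finset.prod_congr rfl hstep, ← Finset.prod_filter, Finset.prod_const]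
  rfl

lemma step1 (hH : WeaklyNorming H) (hnoiso : ∀ v : V, ∃ u, H.Adj v u)
    (c : H.ConnectedComponent) :
    Fintype.card V * (mFn H c).card ≤ (SFn H c).card * (EFn H).card := by
  have hineq := hH Bool (by infer_instance) unifB (by infer_instance) (wD H Wlow c)
    (goodKernel_wD H goodKernel_Wlow c)
    (wD_nonneg H (fun a b => by unfold Wlow; split_ifs <;> norm_num) c)
  rw [decDensity_wD_Wlow H hnoiso c, finprod_homDensity_wD H Wlow c,
    homDensity_Wlow H hnoiso, edgeSet_ncard, ← pow_mul, ← pow_mul] at hineq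
  rw [inv_pow, inv_pow, inv_le_inv₀ (by positivity) (by positivity)] at hineq
  exact (pow_le_pow_iff_right₀ (by norm_num : (1:ℝ) < 2)).mp hineq

lemma step1_eq (hH : WeaklyNorming H) (hnoiso : ∀ v : V, ∃ u, H.Adj v u)
    (c : H.ConnectedComponent) :
    Fintype.card V * (mFn H c).card = (SFn H c).card * (EFn H).card := by
  have hsum : ∑ c' : H.ConnectedComponent, Fintype.card V * (mFn H c').card
      = ∑ c' : H.ConnectedComponent, (SFn H c').card * (EFn H).card := by
    rw [← Finset.mul_sum, ← Finset.sum_mul, sum_SFn_card, sum_mFn_card, mul_comm]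
  have hle := fun (c' : H.ConnectedComponent) (_ : c' ∈ Finset.univ) =>
    step1 H hH hnoiso c'
  exact (Finset.sum_eq_sum_iff_of_le hle).mp hsum c (Finset.mem_univ c)

/-! ### Diagonal kernel computations -/

lemma prod_wD_Wdiag (c : H.ConnectedComponent) (t : ℝ) (x : V → Bool) :
    (∏ e ∈ EFn H, sym2Val (wD H (Wdiag t) c e) x e)
      = t ^ (mFn H c).card *
          ((if (∀ v ∈ SFn H c, x v = false) then (1:ℝ) else 0)
            + (if (∀ v ∈ SFn H c, x v = true) then (1:ℝ) else 0)) := by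
  have hstep : ∀ e ∈ EFn H, sym2Val (wD H (Wdiag t) c e) x e
      = if Pc H c e then (if (∀ a ∈ e, ∀ b ∈ e, x a = x b) then t else 0) else 1 := by
    intro e _
    unfold wD
    by_cases h : Pc H c e
    · rw [if_pos h, if_pos h, sym2Val_Wdiag]
    · rw [if_neg h, if_neg h]
      exact sym2Val_Wone x e
  rw [Finset.prod_congr rfl hstep, ← Finset.prod_filter]
  have hsplit : ∀ e ∈ (EFn H).filter (Pc H c),
      (if (∀ a ∈ e, ∀ b ∈ e, x a = x b) then t else 0)
        = t * (if (∀ a ∈ e, ∀ b ∈ e, x a = x b) then (1:ℝ) else 0) := by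
    intro e _
    split_ifs <;> ring
  rw [Finset.prod_congr rfl hsplit, Finset.prod_mul_distrib, Finset.prod_const,
    Finset.prod_boole]
  show (t ^ (mFn H c).card) * _ = _
  congr 1
  -- now the indicator identity
  set D := ∀ e ∈ (EFn H).filter (Pc H c), ∀ a ∈ e, ∀ b ∈ e, x a = x b with hD
  set v₀ : V := Quot.out c with hv₀
  have hv₀c : H.connectedComponentMk v₀ = c := Quot.out_eq c
  have hmem : ∀ {a b : V}, H.Adj a b → H.connectedComponentMk a = c →
      s(a, b) ∈ (EFn H).filter (Pc H c) := by
    intro a b hadj ha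
    refine Finset.mem_filter.mpr ⟨(mem_EFn H).mpr ((SimpleGraph.mem_edgeSet H).mpr hadj), ?_⟩
    intro w hw
    rcases Sym2.mem_iff.mp hw with rfl | rfl
    · exact (SimpleGraph.ConnectedComponent.mem_supp_iff _ _).mpr ha
    · rw [SimpleGraph.ConnectedComponent.mem_supp_iff,
        ← SimpleGraph.ConnectedComponent.connectedComponentMk_eq_of_adj hadj]
      exact ha
  have hiff : D ↔ ((∀ v ∈ SFn H c, x v = false) ∨ (∀ v ∈ SFn H c, x v = true)) := by
    constructor
    · intro hd
      have hadj : ∀ a b, H.Adj a b → H.connectedComponentMk a = c → x a = x b := by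
        intro a b hab ha
        exact hd _ (hmem hab ha) a (Sym2.mem_mk_left _ _) b (Sym2.mem_mk_right _ _)
      have hconst : ∀ v, H.connectedComponentMk v = c → x v = x v₀ := by
        intro v hv
        refine reach_const_comp H hadj v v₀ hv ?_
        rw [← SimpleGraph.ConnectedComponent.eq, hv, hv₀c]
      cases hb : x v₀ with
      | false => exact Or.inl fun v hv => (hconst v (Finset.mem_filter.mp hv).2).trans hb
      | true => exact Or.inr fun v hv => (hconst v (Finset.mem_filter.mp hv).2).trans hb
    · intro hor e he a ha b hb
      have hP := (Finset.mem_filter.mp he).2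
      have haS : a ∈ SFn H c := (mem_SFn H).mpr (hP a ha)
      have hbS : b ∈ SFn H c := (mem_SFn H).mpr (hP b hb)
      rcases hor with h | h
      · rw [h a haS, h b hbS]
      · rw [h a haS, h b hbS]
  have hv₀S : v₀ ∈ SFn H c := (mem_SFn H).mpr
    ((SimpleGraph.ConnectedComponent.mem_supp_iff _ _).mpr hv₀c)
  by_cases hd : D
  · rw [if_pos hd]
    rcases hiff.mp hd with hf | ht
    · rw [if_pos hf, if_neg, add_zero]
      intro htr
      have := (hf v₀ hv₀S).symm.trans (htr v₀ hv₀S)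
      simp at this
    · rw [if_pos ht, if_neg, zero_add]
      intro hfa
      have := (hfa v₀ hv₀S).symm.trans (ht v₀ hv₀S)
      simp at this
  · rw [if_neg hd, if_neg (fun h => hd (hiff.mpr (Or.inl h))),
      if_neg (fun h => hd (hiff.mpr (Or.inr h))), add_zero]

lemma prod_Wdiag_full (t : ℝ) (x : V → Bool) :
    (∏ e ∈ EFn H, sym2Val (Wdiag t) x e)
      = t ^ (EFn H).card * (if (∀ a b, H.Adj a b → x a = x b) then (1:ℝ) else 0) := by
  have hstep : ∀ e ∈ EFn H, sym2Val (Wdiag t) x e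
      = t * (if (∀ a ∈ e, ∀ b ∈ e, x a = x b) then (1:ℝ) else 0) := by
    intro e _
    rw [sym2Val_Wdiag]
    split_ifs <;> ring
  rw [Finset.prod_congr rfl hstep, Finset.prod_mul_distrib, Finset.prod_const,
    Finset.prod_boole]
  congr 1
  have hiff : (∀ e ∈ EFn H, ∀ a ∈ e, ∀ b ∈ e, x a = x b)
      ↔ (∀ a b, H.Adj a b → x a = x b) := by
    constructor
    · intro h a b hadj
      exact h _ ((mem_EFn H).mpr ((SimpleGraph.mem_edgeSet H).mpr hadj)) a
        (Sym2.mem_mk_left _ _) b (Sym2.mem_mk_right _ _)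
    · intro h e he a ha b hb
      have hadj := adj_of_mem_EFn H he
      have he2 : e = s(e.out.1, e.out.2) := by rw [Sym2.mk, Prod.mk.eta, e.out_eq]
      rw [he2] at ha hb
      rcases Sym2.mem_iff.mp ha with rfl | rfl <;>
        rcases Sym2.mem_iff.mp hb with rfl | rfl
      · rfl
      · exact h _ _ hadj
      · exact (h _ _ hadj).symm
      · rfl
  simp only [hiff]

lemma decDensity_wD_Wdiag (c : H.ConnectedComponent) (t : ℝ) :
    decDensity H unifB (wD H (Wdiag t) c)
      = (2⁻¹:ℝ) ^ (Fintype.card V) * t ^ (mFn H c).card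
          * (2 * 2 ^ (Fintype.card V - (SFn H c).card)) := by
  rw [decDensity_eq_sum]
  simp_rw [prod_wD_Wdiag H c t]
  rw [← Finset.mul_sum, ← Finset.mul_sum, Finset.sum_add_distrib,
    sum_indicator_allb (SFn H c) false, sum_indicator_allb (SFn H c) true]
  ring

lemma homDensity_Wdiag (t : ℝ) :
    homDensity H unifB (Wdiag t)
      = (2⁻¹:ℝ) ^ (Fintype.card V) * t ^ (EFn H).card
          * 2 ^ (Fintype.card H.ConnectedComponent) := by
  rw [homDensity_eq_sum]
  simp_rw [prod_Wdiag_full H t]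
  rw [← Finset.mul_sum, ← Finset.mul_sum, count_Q H]
  ring

lemma step2 (hH : WeaklyNorming H) (hnoiso : ∀ v : V, ∃ u, H.Adj v u)
    (c : H.ConnectedComponent) :
    (EFn H).card ≤ Fintype.card H.ConnectedComponent * (mFn H c).card := by
  have hEpos : 0 < (EFn H).card := by
    obtain ⟨u, hu⟩ := hnoiso (Quot.out c)
    exact Finset.card_pos.mpr ⟨s(Quot.out c, u),
      (mem_EFn H).mpr ((SimpleGraph.mem_edgeSet H).mpr hu)⟩
  have heq := step1_eq H hH hnoiso c
  have hle_nc : (SFn H c).card ≤ Fintype.card V := by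
    rw [← Finset.card_univ]
    exact Finset.card_filter_le _ _
  have hE0 : ((EFn H).card : ℝ) ≠ 0 := Nat.cast_ne_zero.mpr hEpos.ne'
  set γ : ℝ := (Fintype.card V : ℝ) / (EFn H).card with hγ
  set t : ℝ := (2:ℝ) ^ γ with htdef
  have ht0 : 0 ≤ t := Real.rpow_nonneg (by norm_num) _
  have htm : t ^ (mFn H c).card = (2:ℝ) ^ (SFn H c).card := by
    rw [← Real.rpow_natCast t ((mFn H c).card), ← Real.rpow_natCast 2 ((SFn H c).card),
      htdef, ← Real.rpow_mul (by norm_num)]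
    congr 1
    rw [hγ]
    field_simp
    exact_mod_cast heq.trans (mul_comm _ _)
  have htE : t ^ (EFn H).card = (2:ℝ) ^ (Fintype.card V) := by
    rw [← Real.rpow_natCast t ((EFn H).card), ← Real.rpow_natCast 2 (Fintype.card V),
      htdef, ← Real.rpow_mul (by norm_num)]
    congr 1
    rw [hγ]
    field_simp
  have hineq := hH Bool (by infer_instance) unifB (by infer_instance) (wD H (Wdiag t) c)
    (goodKernel_wD H (goodKernel_Wdiag t) c)
    (wD_nonneg H (fun a b => by unfold Wdiag; split_ifs <;> simp [ht0]) c)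
  rw [decDensity_wD_Wdiag H c t, finprod_homDensity_wD H (Wdiag t) c,
    homDensity_Wdiag H t, edgeSet_ncard, htm, htE] at hineq
  have hdec : (2⁻¹:ℝ) ^ (Fintype.card V) * 2 ^ (SFn H c).card
      * (2 * 2 ^ (Fintype.card V - (SFn H c).card)) = 2 := by
    rw [inv_pow, show Fintype.card V = (SFn H c).card + (Fintype.card V - (SFn H c).card)
      from by omega, pow_add]
    have h2 : (0:ℝ) < 2 ^ (SFn H c).card * 2 ^ (Fintype.card V - (SFn H c).card) := by
      positivity
    field_simp
    ring
    rw [Nat.add_sub_cancel_left]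
  have hhom : (2⁻¹:ℝ) ^ (Fintype.card V) * 2 ^ (Fintype.card V)
      * 2 ^ (Fintype.card H.ConnectedComponent)
        = 2 ^ (Fintype.card H.ConnectedComponent) := by
    rw [inv_pow]
    field_simp
  rw [hdec, hhom, ← pow_mul] at hineq
  exact (pow_le_pow_iff_right₀ (by norm_num : (1:ℝ) < 2)).mp hineq

end WNAux

/-- Every connected component of a weakly norming graph `H` without isolated vertices has
the same number of edges. -/
theorem weaklyNorming_components_edge_count {V : Type} [Fintype V]
    (H : SimpleGraph V) (hH : WeaklyNorming H)
    (hnoiso : ∀ v : V, ∃ u, H.Adj v u) (c₁ c₂ : H.ConnectedComponent) :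
    {e ∈ H.edgeSet | ∀ v ∈ e, v ∈ c₁.supp}.ncard
      = {e ∈ H.edgeSet | ∀ v ∈ e, v ∈ c₂.supp}.ncard := by
  have h2 : ∀ c, (EFn H).card ≤ Fintype.card H.ConnectedComponent * (mFn H c).card :=
    step2 H hH hnoiso
  have hsum : ∑ c : H.ConnectedComponent, (mFn H c).card = (EFn H).card := sum_mFn_card H
  obtain ⟨c₀, -, hmin⟩ := Finset.exists_min_image Finset.univ
    (fun c => (mFn H c).card) ⟨c₁, Finset.mem_univ c₁⟩
  have hall : ∀ c, (mFn H c).card = (mFn H c₀).card := by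
    intro c
    by_contra hne
    have hlt : (mFn H c₀).card < (mFn H c).card :=
      lt_of_le_of_ne (hmin c (Finset.mem_univ c)) (fun h => hne h.symm)
    have hstrict : ∑ _c' : H.ConnectedComponent, (mFn H c₀).card
        < ∑ c' : H.ConnectedComponent, (mFn H c').card :=
      Finset.sum_lt_sum (fun i _ => hmin i (Finset.mem_univ i)) ⟨c, Finset.mem_univ c, hlt⟩
    rw [Finset.sum_const, Finset.card_univ, smul_eq_mul, hsum] at hstrict
    exact absurd (h2 c₀) (not_le.mpr hstrict)
  rw [comp_set_ncard, comp_set_ncard, hall c₁, hall c₂]
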